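/- Discrete Poincaré inequality on a uniform 1D grid: for any u : {1,…,N} → ℝ with arithmetic mean ū = (1/N) Σ_q u_q, one has (1/Δv²) Σ_{q=1}^{N−1} (u_{q+1} − u_q)² ≥ λ_N Σ_{q=1}^{N} (u_q − ū)², where λ_N = (4/Δv²) sin²(π/(2N)). -/

import Mathlib

open Real
open Finset
set_option maxHeartbeats 1000000

/-- discrete Poincaré inequality on a uniform 1D grid, with the sharp
constant `λ_N = (4/Δv²) sin²(π/(2N))` (smallest nonzero eigenvalue of the discrete
Neumann Laplacian on `N` points). -/

lemma sum_cos_eq (N : ℕ) (hN : 0 < N) (m : ℕ) (hm0 : 0 < m) (hm : m < 2*N) :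
    ∑ k ∈ Finset.range N, Real.cos (k * m * π / N) = if Even m then 0 else 1 := by
  have hNpos : (0:ℝ) < N := by exact_mod_cast hN
  set θ : ℝ := m * π / (2*N) with hθ
  have hmpos : (0:ℝ) < m := by exact_mod_cast hm0
  have hθpos : 0 < θ := by rw [hθ]; positivity
  have hθlt : θ < π := by
    rw [hθ, div_lt_iff₀ (by positivity)]
    have h2 : (m:ℝ) < 2*N := by exact_mod_cast hm
    nlinarith [Real.pi_pos]
  have hs : Real.sin θ ≠ 0 := ne_of_gt (Real.sin_pos_of_pos_of_lt_pi hθpos hθlt)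
  have key : ∀ k : ℕ, Real.sin ((2*((k:ℝ)+1)-1)*θ) - Real.sin ((2*(k:ℝ)-1)*θ)
      = 2 * Real.sin θ * Real.cos (k * m * π / N) := by
    intro k
    rw [Real.sin_sub_sin]
    have h1 : ((2*((k:ℝ)+1)-1)*θ - (2*(k:ℝ)-1)*θ)/2 = θ := by ring
    have h2 : ((2*((k:ℝ)+1)-1)*θ + (2*(k:ℝ)-1)*θ)/2 = k * m * π / N := by
      rw [hθ]; field_simp; ring
    rw [h1, h2]
  have tele := Finset.sum_range_sub (fun k : ℕ => Real.sin ((2*(k:ℝ)-1)*θ)) N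
  simp only [Nat.cast_add, Nat.cast_one, Nat.cast_zero] at tele
  have tele2 : ∑ k ∈ Finset.range N, (2 * Real.sin θ * Real.cos (k * m * π / N))
      = Real.sin ((2*(N:ℝ)-1)*θ) - Real.sin ((2*(0:ℝ)-1)*θ) := by
    rw [← tele]
    apply Finset.sum_congr rfl
    intro k _
    exact (key k).symm
  have hend : Real.sin ((2*(N:ℝ)-1)*θ) = -((-1:ℝ)^m) * Real.sin θ := by
    have h2Nθ : (2*(N:ℝ)-1)*θ = m * π - θ := by
      rw [hθ]; field_simp
    rw [h2Nθ, Real.sin_sub, Real.sin_nat_mul_pi]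
    have : Real.cos ((m:ℝ) * π) = (-1:ℝ)^m := by
      have := Real.cos_nat_mul_pi_sub 0 m
      simpa using this
    rw [this]; ring
  have hstart : Real.sin ((2*(0:ℝ)-1)*θ) = - Real.sin θ := by
    norm_num
  have main : (2 * Real.sin θ) * ∑ k ∈ Finset.range N, Real.cos (k * m * π / N)
      = (2 * Real.sin θ) * ((1 - (-1:ℝ)^m) / 2) := by
    rw [Finset.mul_sum, tele2, hend, hstart]; ring
  have h2s : (2 * Real.sin θ) ≠ 0 := by positivity
  have := mul_left_cancel₀ h2s main
  rw [this]
  rcases Nat.even_or_odd m with h | h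
  · rw [if_pos h, h.neg_one_pow]; norm_num
  · rw [if_neg (Nat.not_even_iff_odd.mpr h), h.neg_one_pow]; norm_num

lemma sumC (N : ℕ) (hN : 2 ≤ N) (m : ℕ) (hm : m < 2*N) :
    ∑ k ∈ Finset.Icc 1 (N-1), Real.cos (k * m * π / N)
      = if m = 0 then ((N:ℝ)-1) else if Even m then -1 else 0 := by
  have h : ∑ k ∈ Finset.range N, Real.cos (k * m * π / N)
      = if m = 0 then (N:ℝ) else if Even m then 0 else 1 := by
    by_cases h0 : m = 0
    · subst h0
      simp
    · rw [if_neg h0]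
      exact sum_cos_eq N (by omega) m (by omega) hm
  have hIcc : Finset.Icc 1 (N-1) = Finset.Ico 1 N := by
    rw [← Finset.Ico_add_one_right_eq_Icc]; congr 1; omega
  have hsplit : ∑ k ∈ Finset.range N, Real.cos (k * m * π / N)
      = Real.cos (0 * m * π / N) + ∑ k ∈ Finset.Ico 1 N, Real.cos (k * m * π / N) := by
    rw [Finset.range_eq_Ico, Finset.sum_eq_sum_Ico_succ_bot (by omega)]
    norm_num
  rw [hIcc]
  have h0 : Real.cos (0 * m * π / N) = 1 := by norm_num
  rw [h0, h] at hsplit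
  by_cases h1 : m = 0
  · rw [if_pos h1] at hsplit ⊢; linarith
  · rw [if_neg h1] at hsplit ⊢
    by_cases h2 : Even m
    · rw [if_pos h2] at hsplit ⊢; linarith
    · rw [if_neg h2] at hsplit ⊢; linarith

lemma coscos (N : ℕ) (hN : 2 ≤ N) (p q : ℕ) (hp : p ∈ Finset.Icc 1 N) (hq : q ∈ Finset.Icc 1 N) :
    ∑ k ∈ Finset.Icc 1 (N-1),
      Real.cos (k * (2*(p:ℝ)-1) * π / (2*N)) * Real.cos (k * (2*(q:ℝ)-1) * π / (2*N))
      = ((if p = q then (N:ℝ) else 0) - 1)/2 := by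
  simp only [Finset.mem_Icc] at hp hq
  have hprod : ∀ X Y : ℝ, Real.cos X * Real.cos Y = (Real.cos (X-Y) + Real.cos (X+Y))/2 := by
    intro X Y; rw [Real.cos_sub, Real.cos_add]; ring
  set m1 : ℕ := max p q - min p q with hm1
  set m2 : ℕ := p + q - 1 with hm2
  have hterm : ∀ k ∈ Finset.Icc 1 (N-1),
      Real.cos (k * (2*(p:ℝ)-1) * π / (2*N)) * Real.cos (k * (2*(q:ℝ)-1) * π / (2*N))
        = (Real.cos (k * m1 * π / N) + Real.cos (k * m2 * π / N))/2 := by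
    intro k _
    rw [hprod]
    have h2 : (k:ℝ) * (2*(p:ℝ)-1) * π / (2*N) + (k:ℝ) * (2*(q:ℝ)-1) * π / (2*N)
        = k * (m2:ℝ) * π / N := by
      have : (m2:ℝ) = (p:ℝ) + q - 1 := by
        rw [hm2]; push_cast [Nat.cast_sub (by omega : 1 ≤ p + q)]; ring
      rw [this]; field_simp; ring
    rw [h2]
    rcases le_total q p with h | h
    · have : (k:ℝ) * (2*(p:ℝ)-1) * π / (2*N) - (k:ℝ) * (2*(q:ℝ)-1) * π / (2*N)
          = k * (m1:ℝ) * π / N := by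
        have : (m1:ℝ) = (p:ℝ) - q := by
          rw [hm1, max_eq_left h, min_eq_right h]
          push_cast [Nat.cast_sub h]; ring
        rw [this]; field_simp; ring
      rw [this]
    · have : (k:ℝ) * (2*(p:ℝ)-1) * π / (2*N) - (k:ℝ) * (2*(q:ℝ)-1) * π / (2*N)
          = -(k * (m1:ℝ) * π / N) := by
        have : (m1:ℝ) = (q:ℝ) - p := by
          rw [hm1, max_eq_right h, min_eq_left h]
          push_cast [Nat.cast_sub h]; ring
        rw [this]; field_simp; ring
      rw [this, Real.cos_neg]
  rw [Finset.sum_congr rfl hterm]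
  have hsum : ∑ k ∈ Finset.Icc 1 (N-1),
      (Real.cos (k * m1 * π / N) + Real.cos (k * m2 * π / N))/2
      = ((∑ k ∈ Finset.Icc 1 (N-1), Real.cos (k * m1 * π / N))
        + (∑ k ∈ Finset.Icc 1 (N-1), Real.cos (k * m2 * π / N)))/2 := by
    rw [← Finset.sum_add_distrib, ← Finset.sum_div]
  rw [hsum, sumC N hN m1 (by omega), sumC N hN m2 (by omega)]
  by_cases hpq : p = q
  · subst hpq
    rw [if_pos rfl, if_pos (by omega)]
    have hm2odd : ¬ Even m2 := by
      rw [Nat.even_iff]; omega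
    rw [if_neg (by omega : ¬ m2 = 0), if_neg hm2odd]
    ring
  · rw [if_neg hpq, if_neg (by omega : ¬ m1 = 0), if_neg (by omega : ¬ m2 = 0)]
    rcases Nat.even_or_odd m1 with h1 | h1
    · rw [if_pos h1]
      have : ¬ Even m2 := by
        rw [Nat.even_iff] at h1 ⊢; omega
      rw [if_neg this]; ring
    · rw [if_neg (Nat.not_even_iff_odd.mpr h1)]
      have : Even m2 := by
        rw [Nat.odd_iff] at h1; rw [Nat.even_iff]; omega
      rw [if_pos this]; ring

lemma sinsin (N : ℕ) (hN : 2 ≤ N) (p q : ℕ) (hp : p ∈ Finset.Icc 1 (N-1)) (hq : q ∈ Finset.Icc 1 (N-1)) :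
    ∑ k ∈ Finset.Icc 1 (N-1),
      Real.sin (k * (p:ℝ) * π / N) * Real.sin (k * (q:ℝ) * π / N)
      = if p = q then (N:ℝ)/2 else 0 := by
  simp only [Finset.mem_Icc] at hp hq
  have hprod : ∀ X Y : ℝ, Real.sin X * Real.sin Y = (Real.cos (X-Y) - Real.cos (X+Y))/2 := by
    intro X Y; rw [Real.cos_sub, Real.cos_add]; ring
  set m1 : ℕ := max p q - min p q with hm1
  set m2 : ℕ := p + q with hm2
  have hterm : ∀ k ∈ Finset.Icc 1 (N-1),
      Real.sin (k * (p:ℝ) * π / N) * Real.sin (k * (q:ℝ) * π / N)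
        = (Real.cos (k * m1 * π / N) - Real.cos (k * m2 * π / N))/2 := by
    intro k _
    rw [hprod]
    have h2 : (k:ℝ) * (p:ℝ) * π / N + (k:ℝ) * (q:ℝ) * π / N = k * (m2:ℝ) * π / N := by
      have : (m2:ℝ) = (p:ℝ) + q := by rw [hm2]; push_cast; ring
      rw [this]; field_simp
    rw [h2]
    rcases le_total q p with h | h
    · have : (k:ℝ) * (p:ℝ) * π / N - (k:ℝ) * (q:ℝ) * π / N = k * (m1:ℝ) * π / N := by
        have : (m1:ℝ) = (p:ℝ) - q := by
          rw [hm1, max_eq_left h, min_eq_right h]; push_cast [Nat.cast_sub h]; ring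
        rw [this]; field_simp
      rw [this]
    · have : (k:ℝ) * (p:ℝ) * π / N - (k:ℝ) * (q:ℝ) * π / N = -(k * (m1:ℝ) * π / N) := by
        have : (m1:ℝ) = (q:ℝ) - p := by
          rw [hm1, max_eq_right h, min_eq_left h]; push_cast [Nat.cast_sub h]; ring
        rw [this]; field_simp; ring
      rw [this, Real.cos_neg]
  rw [Finset.sum_congr rfl hterm]
  have hsum : ∑ k ∈ Finset.Icc 1 (N-1),
      (Real.cos (k * m1 * π / N) - Real.cos (k * m2 * π / N))/2
      = ((∑ k ∈ Finset.Icc 1 (N-1), Real.cos (k * m1 * π / N))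
        - (∑ k ∈ Finset.Icc 1 (N-1), Real.cos (k * m2 * π / N)))/2 := by
    rw [← Finset.sum_sub_distrib, ← Finset.sum_div]
  rw [hsum, sumC N hN m1 (by omega), sumC N hN m2 (by omega)]
  by_cases hpq : p = q
  · subst hpq
    rw [if_pos rfl, if_pos (by omega)]
    have : Even m2 := by rw [Nat.even_iff]; omega
    rw [if_neg (by omega : ¬ m2 = 0), if_pos this]
    ring
  · rw [if_neg hpq, if_neg (by omega : ¬ m1 = 0), if_neg (by omega : ¬ m2 = 0)]
    rcases Nat.even_or_odd m1 with h1 | h1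
    · rw [if_pos h1]
      have : Even m2 := by
        rw [Nat.even_iff] at h1 ⊢; omega
      rw [if_pos this]; ring
    · rw [if_neg (Nat.not_even_iff_odd.mpr h1)]
      have : ¬ Even m2 := by
        rw [Nat.odd_iff] at h1; rw [Nat.even_iff]; omega
      rw [if_neg this]; ring


lemma sq_expand (T S : Finset ℕ) (f : ℕ → ℝ) (g : ℕ → ℕ → ℝ) :
    ∑ k ∈ T, (∑ p ∈ S, f p * g k p)^2
      = ∑ p ∈ S, ∑ q ∈ S, (f p * f q) * (∑ k ∈ T, g k p * g k q) := by
  have h1 : ∀ k, (∑ p ∈ S, f p * g k p)^2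
      = ∑ p ∈ S, ∑ q ∈ S, (f p * g k p) * (f q * g k q) := by
    intro k
    rw [sq, Finset.sum_mul_sum]
  rw [Finset.sum_congr rfl (fun k _ => h1 k), Finset.sum_comm]
  apply Finset.sum_congr rfl
  intro p _
  rw [Finset.sum_comm]
  apply Finset.sum_congr rfl
  intro q _
  rw [Finset.mul_sum]
  apply Finset.sum_congr rfl
  intro k _
  ring

lemma kernel_sum (S : Finset ℕ) (f : ℕ → ℝ) (a b : ℝ) :
    ∑ p ∈ S, ∑ q ∈ S, (f p * f q) * ((if p = q then a else 0) + b)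
      = a * ∑ p ∈ S, (f p)^2 + b * (∑ p ∈ S, f p)^2 := by
  have h1 : ∀ p ∈ S, ∑ q ∈ S, (f p * f q) * ((if p = q then a else 0) + b)
      = a * (f p)^2 + b * (f p * ∑ q ∈ S, f q) := by
    intro p hp
    have : ∀ q ∈ S, (f p * f q) * ((if p = q then a else 0) + b)
        = (if q = p then a * (f p)^2 else 0) + b * (f p * f q) := by
      intro q _
      by_cases h : p = q
      · subst h; simp; ring
      · rw [if_neg h, if_neg (Ne.symm h)]; ring
    rw [Finset.sum_congr rfl this, Finset.sum_add_distrib, Finset.sum_ite_eq' S p]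
    rw [if_pos hp, ← Finset.mul_sum, ← Finset.mul_sum]
  rw [Finset.sum_congr rfl h1, Finset.sum_add_distrib, ← Finset.mul_sum, ← Finset.mul_sum]
  congr 1
  rw [← Finset.sum_mul, sq]


lemma abel_step (N : ℕ) (hN : 2 ≤ N) (u : ℕ → ℝ) (k : ℕ) (hk : k ∈ Finset.Icc 1 (N-1)) :
    ∑ q ∈ Finset.Icc 1 (N-1), (u (q+1) - u q) * Real.sin ((k:ℝ) * (q:ℝ) * π / N)
      = -2 * Real.sin ((k:ℝ) * π / (2*N)) *
        ∑ q ∈ Finset.Icc 1 N, u q * Real.cos ((k:ℝ) * (2*(q:ℝ)-1) * π / (2*N)) := by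
  have hNne : (N:ℝ) ≠ 0 := by positivity
  set s : ℕ → ℝ := fun q => Real.sin ((k:ℝ) * (q:ℝ) * π / N) with hs
  have hs0 : s 0 = 0 := by simp [hs]
  have hsN : s N = 0 := by
    have : (k:ℝ) * (N:ℝ) * π / N = k * π := by field_simp
    simp only [hs, this]
    exact Real.sin_nat_mul_pi k
  have hsplit : ∑ q ∈ Finset.Icc 1 (N-1), (u (q+1) - u q) * s q
      = (∑ q ∈ Finset.Icc 1 (N-1), u (q+1) * s q) - ∑ q ∈ Finset.Icc 1 (N-1), u q * s q := by
    rw [← Finset.sum_sub_distrib]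
    apply Finset.sum_congr rfl; intro q _; ring
  -- shift the first sum
  have hshift : ∑ q ∈ Finset.Icc 1 (N-1), u (q+1) * s q
      = ∑ q ∈ Finset.Icc 2 N, u q * s (q-1) := by
    rw [show (2:ℕ) = 1+1 from rfl, show N = (N-1)+1 by omega, ← Finset.map_add_right_Icc,
      Finset.sum_map]
    apply Finset.sum_congr rfl
    intro q _
    simp [addRightEmbedding]
  have hA : ∑ q ∈ Finset.Icc 2 N, u q * s (q-1) = ∑ q ∈ Finset.Icc 1 N, u q * s (q-1) := by
    have h1 : Finset.Icc 1 N = insert 1 (Finset.Icc 2 N) := by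
      ext x; simp [Finset.mem_Icc, Finset.mem_insert]; omega
    rw [h1, Finset.sum_insert (by simp)]
    simp [hs0]
  have hB : ∑ q ∈ Finset.Icc 1 (N-1), u q * s q = ∑ q ∈ Finset.Icc 1 N, u q * s q := by
    have h1 : Finset.Icc 1 N = insert N (Finset.Icc 1 (N-1)) := by
      ext x; simp [Finset.mem_Icc, Finset.mem_insert]; omega
    rw [h1, Finset.sum_insert (by simp [Finset.mem_Icc]; omega)]
    simp [hsN]
  rw [hsplit, hshift, hA, hB, ← Finset.sum_sub_distrib, Finset.mul_sum]
  apply Finset.sum_congr rfl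
  intro q hq
  simp only [Finset.mem_Icc] at hq
  have hq1 : ((q-1 : ℕ) : ℝ) = (q:ℝ) - 1 := by
    push_cast [Nat.cast_sub (by omega : 1 ≤ q)]; ring
  have : u q * s (q-1) - u q * s q = u q * (s (q-1) - s q) := by ring
  rw [this]
  have hss : s (q-1) - s q = -2 * Real.sin ((k:ℝ)*π/(2*N)) * Real.cos ((k:ℝ)*(2*(q:ℝ)-1)*π/(2*N)) := by
    simp only [hs, hq1]
    rw [Real.sin_sub_sin]
    have e1 : ((k:ℝ) * ((q:ℝ)-1) * π / N - (k:ℝ) * (q:ℝ) * π / N)/2 = -((k:ℝ)*π/(2*N)) := by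
      field_simp; ring
    have e2 : ((k:ℝ) * ((q:ℝ)-1) * π / N + (k:ℝ) * (q:ℝ) * π / N)/2 = (k:ℝ)*(2*(q:ℝ)-1)*π/(2*N) := by
      field_simp; ring
    rw [e1, e2, Real.sin_neg]
    ring
  rw [hss]
  ring



theorem discrete_poincare_inequality
    (N : ℕ) (hN : 2 ≤ N) (Δv : ℝ) (hΔv : 0 < Δv)
    (u : ℕ → ℝ)
    (ubar : ℝ) (hubar : ubar = (1 / (N : ℝ)) * ∑ q ∈ Finset.Icc 1 N, u q) :
    (1 / Δv^2) * ∑ q ∈ Finset.Icc 1 (N - 1), (u (q+1) - u q)^2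
      ≥ (4 / Δv^2) * Real.sin (π / (2 * N))^2 *
          ∑ q ∈ Finset.Icc 1 N, (u q - ubar)^2 := by
  have hNR : (0:ℝ) < N := by positivity
  have hNne : (N:ℝ) ≠ 0 := ne_of_gt hNR
  set T := Finset.Icc 1 (N-1) with hT
  set S := Finset.Icc 1 N with hS
  set g : ℕ → ℕ → ℝ := fun k q => Real.cos ((k:ℝ) * (2*(q:ℝ)-1) * π / (2*N)) with hg
  set h : ℕ → ℕ → ℝ := fun k q => Real.sin ((k:ℝ) * (q:ℝ) * π / N) with hh
  set c : ℕ → ℝ := fun k => ∑ q ∈ S, u q * g k q with hc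
  set f : ℕ → ℝ := fun q => u (q+1) - u q with hf
  set A := ∑ q ∈ S, (u q)^2 with hA
  set B := ∑ q ∈ S, u q with hB
  -- sum of c_k^2
  have hcsum : ∑ k ∈ T, (c k)^2 = (N:ℝ)/2 * A + (-(1/2)) * B^2 := by
    rw [hc]
    rw [sq_expand T S u g]
    have e2 : ∀ p ∈ S, ∑ q ∈ S, (u p * u q) * (∑ k ∈ T, g k p * g k q)
        = ∑ q ∈ S, (u p * u q) * ((if p = q then (N:ℝ)/2 else 0) + (-(1/2))) := by
      intro p hp
      apply Finset.sum_congr rfl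
      intro q hq
      congr 1
      rw [hT, hg]
      rw [coscos N hN p q hp hq]
      split_ifs <;> ring
    rw [Finset.sum_congr rfl e2]
    exact kernel_sum S u ((N:ℝ)/2) (-(1/2))
  -- sum of d_k^2
  have hdsum : ∑ k ∈ T, (∑ q ∈ T, f q * h k q)^2
      = (N:ℝ)/2 * ∑ q ∈ T, (f q)^2 := by
    rw [sq_expand T T f h]
    have e2 : ∀ p ∈ T, ∑ q ∈ T, (f p * f q) * (∑ k ∈ T, h k p * h k q)
        = ∑ q ∈ T, (f p * f q) * ((if p = q then (N:ℝ)/2 else 0) + 0) := by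
      intro p hp
      apply Finset.sum_congr rfl
      intro q hq
      congr 1
      rw [hT, hh]
      rw [sinsin N hN p q hp hq, add_zero]
    rw [Finset.sum_congr rfl e2, kernel_sum T f ((N:ℝ)/2) 0]
    ring
  -- Abel summation: d k = -2 sin(kπ/2N) c k
  have habel : ∀ k ∈ T, ∑ q ∈ T, f q * h k q
      = -2 * Real.sin ((k:ℝ) * π / (2*N)) * c k := by
    intro k hk
    exact abel_step N hN u k hk
  -- hence ∑ d² = ∑ 4 sin² c²
  have hdsum2 : ∑ k ∈ T, (∑ q ∈ T, f q * h k q)^2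
      = ∑ k ∈ T, 4 * Real.sin ((k:ℝ) * π / (2*N))^2 * (c k)^2 := by
    apply Finset.sum_congr rfl
    intro k hk
    rw [habel k hk]
    ring
  -- energy identity
  have hW : ∑ q ∈ T, (f q)^2
      = (8/(N:ℝ)) * ∑ k ∈ T, Real.sin ((k:ℝ) * π / (2*N))^2 * (c k)^2 := by
    have := hdsum
    rw [hdsum2] at this
    have h4 : ∑ k ∈ T, 4 * Real.sin ((k:ℝ) * π / (2*N))^2 * (c k)^2
        = 4 * ∑ k ∈ T, Real.sin ((k:ℝ) * π / (2*N))^2 * (c k)^2 := by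
      rw [Finset.mul_sum]
      apply Finset.sum_congr rfl
      intro k _
      ring
    rw [h4] at this
    field_simp at this ⊢
    simp only [mul_comm π]
    linarith
  -- variance identity
  have hcard : (S.card : ℝ) = N := by
    rw [hS, Nat.card_Icc]
    push_cast [Nat.add_sub_cancel]
    ring
  have hvar : ∑ q ∈ S, (u q - ubar)^2 = A - B^2/N := by
    have e1 : ∀ q ∈ S, (u q - ubar)^2 = (u q)^2 - 2*ubar*(u q) + ubar^2 := by
      intro q _; ring
    rw [Finset.sum_congr rfl e1]
    rw [Finset.sum_add_distrib, Finset.sum_sub_distrib, Finset.sum_const, ← hA]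
    have e2 : ∑ q ∈ S, 2*ubar*(u q) = 2*ubar*B := by
      rw [hB, Finset.mul_sum]
    rw [e2, nsmul_eq_mul, hcard, hubar]
    field_simp
    ring
  have hU : ∑ q ∈ S, (u q - ubar)^2 = (2/(N:ℝ)) * ∑ k ∈ T, (c k)^2 := by
    rw [hvar, hcsum]
    field_simp
    ring
  -- monotonicity of sin²
  have hmono : ∀ k ∈ T, Real.sin (π / (2 * N))^2 * (c k)^2
      ≤ Real.sin ((k:ℝ) * π / (2*N))^2 * (c k)^2 := by
    intro k hk
    rw [hT, Finset.mem_Icc] at hk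
    have hk1 : (1:ℝ) ≤ k := by exact_mod_cast hk.1
    have hkN : (k:ℝ) ≤ N - 1 := by
      have : (k:ℝ) ≤ ((N-1 : ℕ) : ℝ) := by exact_mod_cast hk.2
      rw [Nat.cast_sub (by omega)] at this
      simpa using this
    have h1 : 0 < π / (2*N) := by positivity
    have h2 : π / (2*N) ≤ (k:ℝ) * π / (2*N) := by
      rw [div_le_div_iff₀ (by positivity) (by positivity)]
      nlinarith [mul_nonneg (sub_nonneg.mpr hk1) (by positivity : (0:ℝ) ≤ π * (2*N))]
    have h3 : (k:ℝ) * π / (2*N) ≤ π/2 := by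
      rw [div_le_div_iff₀ (by positivity) (by norm_num : (0:ℝ) < 2)]
      nlinarith [Real.pi_pos]
    have hmem1 : π / (2*N) ∈ Set.Icc (-(π/2)) (π/2) := by
      constructor
      · linarith [Real.pi_pos, h1]
      · linarith
    have hmem2 : (k:ℝ) * π / (2*N) ∈ Set.Icc (-(π/2)) (π/2) := by
      constructor
      · linarith [h1, h2]
      · exact h3
    have hsle : Real.sin (π / (2*N)) ≤ Real.sin ((k:ℝ) * π / (2*N)) :=
      Real.strictMonoOn_sin.monotoneOn hmem1 hmem2 h2
    have hsnn : 0 ≤ Real.sin (π / (2*N)) :=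
      Real.sin_nonneg_of_nonneg_of_le_pi (le_of_lt h1) (by linarith [Real.pi_pos])
    exact mul_le_mul_of_nonneg_right (pow_le_pow_left₀ hsnn hsle 2) (sq_nonneg _)
  have hle : ∑ k ∈ T, Real.sin (π / (2 * N))^2 * (c k)^2
      ≤ ∑ k ∈ T, Real.sin ((k:ℝ) * π / (2*N))^2 * (c k)^2 :=
    Finset.sum_le_sum hmono
  -- final assembly
  rw [ge_iff_le, hU, hW]
  have e3 : (4 / Δv^2) * Real.sin (π / (2 * N))^2 * ((2/(N:ℝ)) * ∑ k ∈ T, (c k)^2)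
      = (8/((N:ℝ)*Δv^2)) * ∑ k ∈ T, Real.sin (π / (2 * N))^2 * (c k)^2 := by
    rw [Finset.mul_sum, Finset.mul_sum, Finset.mul_sum]
    apply Finset.sum_congr rfl
    intro k _
    field_simp
    ring
  have e4 : (1 / Δv^2) * ((8/(N:ℝ)) * ∑ k ∈ T, Real.sin ((k:ℝ) * π / (2*N))^2 * (c k)^2)
      = (8/((N:ℝ)*Δv^2)) * ∑ k ∈ T, Real.sin ((k:ℝ) * π / (2*N))^2 * (c k)^2 := by
    ring
  rw [e3, e4]
  apply mul_le_mul_of_nonneg_left hle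
  positivity
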